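/- Let k ≥ 1 and let s_1 < s_2 < … < s_k be Type II indices (so each s_i ≥ 2 and a_{s_i+1} = √(A_{s_i})/(2n)). Then A_{s_k} ≥ k²/(36·n²) and a_{s_k} ≥ (k−1)/(12·n²). -/

import Mathlib

set_option maxHeartbeats 1000000 in
/-- If `s_1 < … < s_k` are Type II indices (each `s_i ≥ 2` with
`a_{s_i+1} = √(A_{s_i})/(2n)`), then `A_{s_k} ≥ k²/(36n²)` and `a_{s_k} ≥ (k−1)/(12n²)`. -/
theorem typeII_growth (n : ℕ) (hn : 4 ≤ n)
    (a A : ℕ → ℝ)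
    (ha1 : a 1 = 1 / (Real.sqrt 2 * (n : ℝ) ^ ((3:ℝ)/2)))
    (ha2 : a 2 = a 1 / ((n : ℝ) - 1))
    (hA0 : A 0 = 0)
    (hArec : ∀ k, A (k+1) = A k + a (k+1))
    (harec : ∀ k, 1 ≤ k →
      a (k+2) = min ((n : ℝ) * a (k+1) / ((n : ℝ) - 1)) (Real.sqrt (A (k+1)) / (2 * n)))
    (k : ℕ) (hk : 1 ≤ k)
    (s : Fin k → ℕ) (hs_mono : StrictMono s)
    (hs_ge : ∀ i, 2 ≤ s i)
    (hs_typeII : ∀ i, a (s i + 1) = Real.sqrt (A (s i)) / (2 * n)) :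
    A (s ⟨k - 1, by omega⟩) ≥ (k : ℝ)^2 / (36 * (n : ℝ)^2) ∧
    a (s ⟨k - 1, by omega⟩) ≥ ((k : ℝ) - 1) / (12 * (n : ℝ)^2) := by
  have hnR : (4:ℝ) ≤ (n:ℝ) := by exact_mod_cast hn
  have hn0 : (0:ℝ) < (n:ℝ) := by linarith
  have hn1 : (0:ℝ) < (n:ℝ) - 1 := by linarith
  set t : ℝ := Real.sqrt 2 * (n:ℝ) ^ ((3:ℝ)/2) with ht
  have ht0 : 0 < t := by
    have := Real.rpow_pos_of_pos hn0 ((3:ℝ)/2)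
    have h2 : (0:ℝ) < Real.sqrt 2 := Real.sqrt_pos.mpr (by norm_num)
    exact mul_pos h2 this
  have ht2 : t ^ 2 = 2 * (n:ℝ) ^ 3 := by
    rw [ht, mul_pow, Real.sq_sqrt (by norm_num : (0:ℝ) ≤ 2),
      ← Real.rpow_natCast ((n:ℝ) ^ ((3:ℝ)/2)) 2, ← Real.rpow_mul hn0.le]
    norm_num
  have ha1' : a 1 = 1 / t := ha1
  -- positivity
  have main : ∀ m, 0 < a (m+1) ∧ 0 ≤ A m := by
    intro m
    induction m using Nat.strong_induction_on with
    | _ m ih =>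
      have hA : 0 ≤ A m := by
        cases m with
        | zero => simp [hA0]
        | succ p =>
          rw [hArec p]
          have h1 := (ih p (by omega)).2
          have h2 := (ih p (by omega)).1
          linarith
      refine ⟨?_, hA⟩
      match m with
      | 0 => rw [ha1']; positivity
      | 1 => rw [ha2, ha1']; positivity
      | (p+2) =>
        rw [harec (p+1) (by omega)]
        have hap : 0 < a (p+2) := (ih (p+1) (by omega)).1
        have hA2 : 0 < A (p+2) := by
          rw [hArec (p+1)]
          have := (ih (p+1) (by omega)).2
          linarith
        have h1 : 0 < (n:ℝ) * a (p+2) / ((n:ℝ)-1) := by positivity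
        have h2 : 0 < Real.sqrt (A (p+2)) / (2*(n:ℝ)) := by
          apply div_pos (Real.sqrt_pos.mpr hA2) (by linarith)
        exact lt_min h1 h2
  have hapos : ∀ m, 1 ≤ m → 0 < a m := by
    intro m hm
    obtain ⟨p, rfl⟩ : ∃ p, m = p + 1 := ⟨m - 1, by omega⟩
    exact (main p).1
  have hAmono : Monotone A := by
    apply monotone_nat_of_le_succ
    intro m
    rw [hArec m]
    have := (main m).1
    linarith
  have hA1 : A 1 = a 1 := by rw [hArec 0, hA0]; ring
  have hApos : ∀ m, 1 ≤ m → 0 < A m := by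
    intro m hm
    have h1 : A 1 ≤ A m := hAmono hm
    have : 0 < a 1 := hapos 1 le_rfl
    rw [hA1] at h1; linarith
  -- a 1 ≥ 1/(36 n²)
  have ht36 : t ≤ 36 * (n:ℝ)^2 := by
    apply le_of_pow_le_pow_left₀ (two_ne_zero) (by positivity)
    rw [ht2]
    nlinarith [hnR, hn0]
  have ha1ge : 1 / (36 * (n:ℝ)^2) ≤ a 1 := by
    rw [ha1']
    exact one_div_le_one_div_of_le ht0 ht36
  -- u = √t
  set u : ℝ := Real.sqrt t with hu
  have hu0 : 0 < u := Real.sqrt_pos.mpr ht0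
  have hu2 : u ^ 2 = t := Real.sq_sqrt ht0.le
  have hu4 : u ^ 4 = 2 * (n:ℝ)^3 := by
    have : u ^ 4 = (u ^ 2) ^ 2 := by ring
    rw [this, hu2, ht2]
  have hkey : 2 * (n:ℝ) ≤ ((n:ℝ) - 1) * u := by
    apply le_of_pow_le_pow_left₀ (by norm_num : (4:ℕ) ≠ 0) (by positivity)
    have h3 : (3:ℝ) ≤ (n:ℝ) - 1 := by linarith
    have h27 : (27:ℝ) ≤ ((n:ℝ)-1)^3 := by nlinarith
    have h8 : 8 * (n:ℝ) ≤ ((n:ℝ)-1)^4 := by nlinarith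
    calc (2*(n:ℝ))^4 = 16 * (n:ℝ)^4 := by ring
      _ ≤ ((n:ℝ)-1)^4 * (2 * (n:ℝ)^3) := by nlinarith [pow_pos hn0 3]
      _ = ((n:ℝ)-1)^4 * u^4 := by rw [hu4]
      _ = (((n:ℝ)-1) * u)^4 := by ring
  -- a 2 ≤ √(A 2)/(2n)
  have hsqrta1 : Real.sqrt (1 / t) = 1 / u := by
    rw [one_div, Real.sqrt_inv, ← hu, one_div]
  have ha2le : a 2 ≤ Real.sqrt (A 2) / (2 * (n:ℝ)) := by
    have step1 : a 2 ≤ Real.sqrt (a 1) / (2 * (n:ℝ)) := by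
      rw [ha2, ha1', hsqrta1, div_div, div_div,
        div_le_div_iff₀ (by positivity) (by positivity)]
      have htu : t = u * u := by rw [← hu2]; ring
      have hmul := mul_le_mul_of_nonneg_left hkey hu0.le
      rw [htu]
      nlinarith [hmul]
    have h12 : a 1 ≤ A 2 := by
      have : A 2 = a 1 + a 2 := by rw [hArec 1, hA1]
      have := hapos 2 (by omega)
      linarith [this]
    calc a 2 ≤ Real.sqrt (a 1) / (2 * (n:ℝ)) := step1
      _ ≤ Real.sqrt (A 2) / (2 * (n:ℝ)) := by gcongr
  -- a m ≤ √(A m)/(2n) for m ≥ 2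
  have hle : ∀ m, 2 ≤ m → a m ≤ Real.sqrt (A m) / (2 * (n:ℝ)) := by
    intro m hm
    match m, hm with
    | 2, _ => exact ha2le
    | (p+3), _ =>
      rw [harec (p+1) (by omega)]
      calc min ((n:ℝ) * a (p+2) / ((n:ℝ)-1)) (Real.sqrt (A (p+2)) / (2*(n:ℝ)))
          ≤ Real.sqrt (A (p+2)) / (2*(n:ℝ)) := min_le_right _ _
        _ ≤ Real.sqrt (A (p+3)) / (2*(n:ℝ)) := by
            gcongr
            exact hAmono (by omega)
  -- a is monotone from 2 on
  have hstep : ∀ m, 2 ≤ m → a m ≤ a (m+1) := by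
    intro m hm
    obtain ⟨q, rfl⟩ : ∃ q, m = q + 2 := ⟨m - 2, by omega⟩
    rw [harec (q+1) (by omega)]
    apply le_min
    · rw [le_div_iff₀ hn1]
      have := hapos (q+2) (by omega)
      nlinarith
    · exact hle (q+2) (by omega)
  have hmono : ∀ m m', 2 ≤ m → m ≤ m' → a m ≤ a m' := by
    intro m m' hm hmm
    induction m' with
    | zero => omega
    | succ p ih =>
      rcases Nat.lt_or_ge m (p+1) with h | h
      · exact le_trans (ih (by omega)) (hstep p (by omega))
      · have : m = p + 1 := by omega
        subst this; rfl
  -- growth of A along type II indices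
  have hgrow : ∀ j, ∀ hj : j < k, ((j:ℝ)+1)^2 / (36*(n:ℝ)^2) ≤ A (s ⟨j, hj⟩) := by
    intro j
    induction j with
    | zero =>
      intro hj
      have h1 : A 1 ≤ A (s ⟨0, hj⟩) := hAmono (by have := hs_ge ⟨0, hj⟩; omega)
      rw [hA1] at h1
      simp only [Nat.cast_zero]
      calc ((0:ℝ)+1)^2 / (36*(n:ℝ)^2) = 1 / (36*(n:ℝ)^2) := by ring
        _ ≤ a 1 := ha1ge
        _ ≤ A (s ⟨0, hj⟩) := h1
    | succ j ih =>
      intro hj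
      have hj' : j < k := by omega
      have ihx := ih hj'
      set x := A (s ⟨j, hj'⟩) with hx
      have hx0 : 0 < x := hApos _ (by have := hs_ge ⟨j, hj'⟩; omega)
      have hsqrt : ((j:ℝ)+1)/(6*(n:ℝ)) ≤ Real.sqrt x := by
        have h := Real.sqrt_le_sqrt ihx
        rwa [show ((j:ℝ)+1)^2/(36*(n:ℝ)^2) = (((j:ℝ)+1)/(6*(n:ℝ)))^2 by ring,
          Real.sqrt_sq (by positivity)] at h
      have hstep1 : A (s ⟨j, hj'⟩ + 1) = x + Real.sqrt x / (2*(n:ℝ)) := by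
        rw [hArec, hs_typeII ⟨j, hj'⟩]
      have hlt : (⟨j, hj'⟩ : Fin k) < ⟨j+1, hj⟩ := by
        simp only [Fin.mk_lt_mk]; omega
      have hss : s ⟨j, hj'⟩ + 1 ≤ s ⟨j+1, hj⟩ := hs_mono hlt
      have hA2 : A (s ⟨j, hj'⟩ + 1) ≤ A (s ⟨j+1, hj⟩) := hAmono hss
      have hs2 : ((j:ℝ)+1)/(12*(n:ℝ)^2) ≤ Real.sqrt x / (2*(n:ℝ)) := by
        calc ((j:ℝ)+1)/(12*(n:ℝ)^2) = (((j:ℝ)+1)/(6*(n:ℝ))) / (2*(n:ℝ)) := by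
              rw [div_div]; ring_nf
          _ ≤ Real.sqrt x / (2*(n:ℝ)) := by gcongr
      have hkey2 : (((j:ℕ):ℝ)+1+1)^2 / (36*(n:ℝ)^2)
          ≤ ((j:ℝ)+1)^2/(36*(n:ℝ)^2) + ((j:ℝ)+1)/(12*(n:ℝ)^2) := by
        have h3 : ((j:ℝ)+1)/(12*(n:ℝ)^2) = (3*((j:ℝ)+1))/(36*(n:ℝ)^2) := by
          rw [div_eq_div_iff (by positivity) (by positivity)]; ring
        rw [h3, ← add_div]
        have hj0 : (0:ℝ) ≤ (j:ℝ) := Nat.cast_nonneg j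
        gcongr
        nlinarith
      push_cast
      calc ((j:ℝ)+1+1)^2 / (36*(n:ℝ)^2)
          ≤ ((j:ℝ)+1)^2/(36*(n:ℝ)^2) + ((j:ℝ)+1)/(12*(n:ℝ)^2) := by exact_mod_cast hkey2
        _ ≤ x + Real.sqrt x / (2*(n:ℝ)) := by
            have := add_le_add ihx hs2
            linarith
        _ = A (s ⟨j, hj'⟩ + 1) := hstep1.symm
        _ ≤ A (s ⟨j+1, hj⟩) := hA2
  have hj : k - 1 < k := by omega
  have hcast : ((k-1:ℕ):ℝ) + 1 = (k:ℝ) := by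
    have : ((k-1:ℕ):ℝ) = (k:ℝ) - 1 := by
      push_cast [Nat.cast_sub hk]; ring
    rw [this]; ring
  constructor
  · have h := hgrow (k-1) hj
    rw [hcast] at h
    exact h
  · rcases eq_or_lt_of_le hk with h1 | h2
    · -- k = 1
      have hk1 : k = 1 := h1.symm
      subst hk1
      have hpos := hapos (s ⟨1-1, hj⟩) (by have := hs_ge ⟨1-1, hj⟩; omega)
      have h0 : ((1:ℕ):ℝ) - 1 = 0 := by norm_num
      rw [h0, zero_div]
      exact hpos.le
    · have hk2 : 2 ≤ k := h2
      have hj' : k - 2 < k := by omega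
      have hlt : (⟨k-2, hj'⟩ : Fin k) < ⟨k-1, hj⟩ := by simp only [Fin.mk_lt_mk]; omega
      have hss := hs_mono hlt
      have h1 : a (s ⟨k-2, hj'⟩ + 1) ≤ a (s ⟨k-1, hj⟩) :=
        hmono _ _ (by have := hs_ge ⟨k-2, hj'⟩; omega) (by omega)
      have h2' : a (s ⟨k-2, hj'⟩ + 1) = Real.sqrt (A (s ⟨k-2, hj'⟩)) / (2*(n:ℝ)) :=
        hs_typeII _
      have h3 := hgrow (k-2) hj'
      have hcast2 : ((k-2:ℕ):ℝ) + 1 = (k:ℝ) - 1 := by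
        have : ((k-2:ℕ):ℝ) = (k:ℝ) - 2 := by
          push_cast [Nat.cast_sub hk2]; ring
        rw [this]; ring
      rw [hcast2] at h3
      have hsqrt : ((k:ℝ)-1)/(6*(n:ℝ)) ≤ Real.sqrt (A (s ⟨k-2, hj'⟩)) := by
        have h := Real.sqrt_le_sqrt h3
        have hk1R : (0:ℝ) ≤ (k:ℝ) - 1 := by
          have : (1:ℝ) ≤ (k:ℝ) := by exact_mod_cast hk
          linarith
        rwa [show ((k:ℝ)-1)^2/(36*(n:ℝ)^2) = (((k:ℝ)-1)/(6*(n:ℝ)))^2 by ring,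
          Real.sqrt_sq (by positivity)] at h
      calc ((k:ℝ)-1)/(12*(n:ℝ)^2) = (((k:ℝ)-1)/(6*(n:ℝ))) / (2*(n:ℝ)) := by
            rw [div_div]; ring_nf
        _ ≤ Real.sqrt (A (s ⟨k-2, hj'⟩)) / (2*(n:ℝ)) := by gcongr
        _ = a (s ⟨k-2, hj'⟩ + 1) := h2'.symm
        _ ≤ a (s ⟨k-1, hj⟩) := h1
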